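/- arXiv:2211.13549 — 5 statements merged into one kernel-verified Lean document; each statement's English description precedes it below -/
import Mathlib

section
/- Let A be a bounded self-adjoint positive operator on a real separable Hilbert space with ‖A‖ ≤ C* for some C* > 0, let λ > 0, and let γ_t, …, γ_k be positive reals with γ_j (C* + λ) ≤ 1 for all j ∈ [t, k]. Then for every α > 0, ‖A^α ∏_{j=t}^{k} (I − γ_j (A + λ I))‖² ≤ ((α/e)^{2α} + C*^{2α}) / ( exp(λ ∑_{j=t}^{k} γ_j) · (1 + (∑_{j=t}^{k} γ_j)^{2α}) ). -/
set_option maxHeartbeats 1000000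
set_option synthInstance.maxHeartbeats 400000

private theorem aux_exp' (β u : ℝ) (hβ : 0 < β) (hu : 0 ≤ u) :
    u ^ β * Real.exp (-u) ≤ (β / Real.exp 1) ^ β := by
  rcases eq_or_lt_of_le hu with h | h
  · rw [← h, Real.zero_rpow hβ.ne', zero_mul]
    positivity
  · have hlog : Real.log (u / β) ≤ u / β - 1 := Real.log_le_sub_one_of_pos (by positivity)
    rw [Real.log_div h.ne' hβ.ne'] at hlog
    have key : Real.log u * β - u ≤ (Real.log β - 1) * β := by
      have := mul_le_mul_of_nonneg_right hlog hβ.le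
      rw [sub_mul, sub_mul, div_mul_cancel₀ _ hβ.ne'] at this
      nlinarith
    calc u ^ β * Real.exp (-u) = Real.exp (Real.log u * β - u) := by
          rw [Real.rpow_def_of_pos h, Real.exp_sub, Real.exp_neg]; ring
      _ ≤ Real.exp ((Real.log β - 1) * β) := Real.exp_le_exp.mpr key
      _ = (β / Real.exp 1) ^ β := by
          rw [Real.rpow_def_of_pos (by positivity), Real.log_div hβ.ne' (Real.exp_ne_zero 1),
            Real.log_exp]

private theorem aux_exp2' (α u : ℝ) (hα : 0 < α) (hu : 0 ≤ u) :
    u ^ (2*α) * Real.exp (-(2*u)) ≤ (α / Real.exp 1) ^ (2*α) := by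
  have h := aux_exp' (2*α) (2*u) (by positivity) (by positivity)
  rw [Real.mul_rpow (by norm_num) hu] at h
  have h2 : (2*α / Real.exp 1) = 2 * (α / Real.exp 1) := by ring
  rw [h2, Real.mul_rpow (by norm_num) (by positivity)] at h
  have h3 : (0:ℝ) < (2:ℝ) ^ (2*α) := by positivity
  calc u ^ (2*α) * Real.exp (-(2*u))
      = ((2:ℝ)^(2*α) * u^(2*α) * Real.exp (-(2*u))) / (2:ℝ)^(2*α) := by
        field_simp
    _ ≤ ((2:ℝ)^(2*α) * (α / Real.exp 1) ^ (2*α)) / (2:ℝ)^(2*α) := by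
        apply div_le_div_of_nonneg_right ?_ h3.le
        · linarith [h]
    _ = (α / Real.exp 1) ^ (2*α) := by field_simp

private theorem key_scalar' (C lam α S : ℝ) (hlam : 0 < lam) (hα : 0 < α) (hS : 0 ≤ S)
    (x p : ℝ) (hx0 : 0 ≤ x) (hxC : x ≤ C) (hp0 : 0 ≤ p)
    (hpe : p ≤ Real.exp (-((x+lam)*S))) :
    (x ^ α * p)^2 ≤ ((α / Real.exp 1) ^ (2*α) + C ^ (2*α)) /
      (Real.exp (lam*S) * (1 + S^(2*α))) := by
  have hden : (0:ℝ) < Real.exp (lam*S) * (1 + S^(2*α)) := by positivity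
  rw [le_div_iff₀ hden]
  have hx2a : (x^α)^2 = x^(2*α) := by
    rw [← Real.rpow_natCast (x^α) 2, ← Real.rpow_mul hx0]
    norm_num [mul_comm]
  have hp2 : p^2 ≤ Real.exp (-(2*((x+lam)*S))) := by
    calc p^2 ≤ (Real.exp (-((x+lam)*S)))^2 := by
          apply pow_le_pow_left₀ hp0 hpe
      _ = Real.exp (-(2*((x+lam)*S))) := by
          rw [← Real.exp_nat_mul]; ring_nf
  have step1 : (x ^ α * p)^2 * (Real.exp (lam*S) * (1 + S^(2*α)))
      ≤ x^(2*α) * Real.exp (-(2*(x*S))) * Real.exp (-(lam*S)) * (1 + S^(2*α)) := by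
    have e1 : (x ^ α * p)^2 = x^(2*α) * p^2 := by rw [mul_pow, hx2a]
    rw [e1]
    have e2 : Real.exp (-(2*((x+lam)*S))) * Real.exp (lam*S)
        = Real.exp (-(2*(x*S))) * Real.exp (-(lam*S)) := by
      rw [← Real.exp_add, ← Real.exp_add]; ring_nf
    calc x^(2*α) * p^2 * (Real.exp (lam*S) * (1 + S^(2*α)))
        ≤ x^(2*α) * Real.exp (-(2*((x+lam)*S))) * (Real.exp (lam*S) * (1 + S^(2*α))) := by
          apply mul_le_mul_of_nonneg_right ?_ (by positivity)
          exact mul_le_mul_of_nonneg_left hp2 (by positivity)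
      _ = x^(2*α) * (Real.exp (-(2*((x+lam)*S))) * Real.exp (lam*S)) * (1 + S^(2*α)) := by ring
      _ = x^(2*α) * Real.exp (-(2*(x*S))) * Real.exp (-(lam*S)) * (1 + S^(2*α)) := by
          rw [e2]; ring
  have step2 : x^(2*α) * Real.exp (-(2*(x*S))) * Real.exp (-(lam*S)) * (1 + S^(2*α))
      ≤ x^(2*α) * Real.exp (-(2*(x*S))) * (1 + S^(2*α)) := by
    have : Real.exp (-(lam*S)) ≤ 1 := Real.exp_le_one_iff.mpr (by nlinarith)
    nlinarith [Real.exp_pos (-(2*(x*S))), Real.rpow_nonneg hx0 (2*α), Real.rpow_nonneg hS (2*α),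
      mul_pos (Real.exp_pos (-(2*(x*S)))) (Real.exp_pos (-(lam*S))),
      mul_nonneg (mul_nonneg (Real.rpow_nonneg hx0 (2*α)) (Real.exp_pos (-(2*(x*S)))).le)
        (add_nonneg zero_le_one (Real.rpow_nonneg hS (2*α)))]
  have step3 : x^(2*α) * Real.exp (-(2*(x*S))) * (1 + S^(2*α))
      ≤ C ^ (2*α) + (α / Real.exp 1) ^ (2*α) := by
    have t1 : x^(2*α) * Real.exp (-(2*(x*S))) ≤ C^(2*α) := by
      calc x^(2*α) * Real.exp (-(2*(x*S))) ≤ x^(2*α) * 1 := by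
            apply mul_le_mul_of_nonneg_left _ (Real.rpow_nonneg hx0 _)
            exact Real.exp_le_one_iff.mpr (by nlinarith [mul_nonneg hx0 hS])
        _ = x^(2*α) := mul_one _
        _ ≤ C^(2*α) := Real.rpow_le_rpow hx0 hxC (by positivity)
    have t2 : x^(2*α) * Real.exp (-(2*(x*S))) * S^(2*α) ≤ (α / Real.exp 1) ^ (2*α) := by
      have e3 : x^(2*α) * Real.exp (-(2*(x*S))) * S^(2*α)
          = (x*S)^(2*α) * Real.exp (-(2*(x*S))) := by
        rw [Real.mul_rpow hx0 hS]; ring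
      rw [e3]
      exact aux_exp2' α (x*S) hα (mul_nonneg hx0 hS)
    nlinarith [t1, t2]
  linarith [step1, step2, step3]

private theorem list_prod_nonneg' (f : ℕ → ℝ) (l : List ℕ) (h : ∀ j ∈ l, 0 ≤ f j) :
    0 ≤ (l.map f).prod := by
  induction l with
  | nil => simp
  | cons a l ih =>
    simp only [List.map_cons, List.prod_cons]
    exact mul_nonneg (h a (by simp)) (ih fun j hj => h j (by simp [hj]))

private theorem list_prod_le_prod' (f g : ℕ → ℝ) (l : List ℕ) (h0 : ∀ j ∈ l, 0 ≤ f j)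
    (h1 : ∀ j ∈ l, f j ≤ g j) : (l.map f).prod ≤ (l.map g).prod := by
  induction l with
  | nil => simp
  | cons a l ih =>
    simp only [List.map_cons, List.prod_cons]
    have hf := h0 a (by simp)
    have hg := hf.trans (h1 a (by simp))
    exact mul_le_mul (h1 a (by simp)) (ih (fun j hj => h0 j (by simp [hj]))
      (fun j hj => h1 j (by simp [hj]))) (list_prod_nonneg' f l fun j hj => h0 j (by simp [hj])) hg

private theorem list_prod_exp' (γ : ℕ → ℝ) (c : ℝ) (l : List ℕ) :
    (l.map (fun j => Real.exp (c * γ j))).prod = Real.exp (c * (l.map γ).sum) := by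
  induction l with
  | nil => simp
  | cons a l ih =>
    simp only [List.map_cons, List.prod_cons, List.sum_cons, ih, ← Real.exp_add, mul_add]

private theorem cont_list_prod' (f : ℕ → ℝ → ℝ) (hf : ∀ j, Continuous (f j)) (l : List ℕ) :
    Continuous (fun x : ℝ => (l.map (fun j => f j x)).prod) := by
  induction l with
  | nil => simpa using continuous_const
  | cons b l ih =>
    simp only [List.map_cons, List.prod_cons]
    exact (hf b).mul ih

private theorem cfc_list_prod' {H : Type*} [NormedAddCommGroup H] [InnerProductSpace ℂ H]
    [CompleteSpace H] (A : H →L[ℂ] H) (hA : IsSelfAdjoint A) (f : ℕ → ℝ → ℝ)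
    (hf : ∀ j, Continuous (f j)) (l : List ℕ) :
    ((l.map (fun j => cfc (f j) A)).prod) = cfc (fun x => (l.map (fun j => f j x)).prod) A := by
  induction l with
  | nil => simp [cfc_const (1:ℝ) A]
  | cons a l ih =>
    simp only [List.map_cons, List.prod_cons, ih]
    rw [← cfc_mul _ _ A (hf a).continuousOn (cont_list_prod' f hf l).continuousOn]

/-- Let `A` be a bounded self-adjoint positive operator on a separable
Hilbert space with `‖A‖ ≤ C*`, let `λ > 0`, and let `γ_t, …, γ_k` be positive reals with
`γ_j (C* + λ) ≤ 1`.  Then for every `α > 0`,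
`‖A^α ∏_{j=t}^k (I − γ_j (A + λ I))‖² ≤ ((α/e)^{2α} + C*^{2α}) /
  (exp(λ ∑ γ_j) (1 + (∑ γ_j)^{2α}))`.
Here `A^α` is given by the continuous functional calculus. -/
theorem stmt0 {H : Type*} [NormedAddCommGroup H] [InnerProductSpace ℂ H] [CompleteSpace H]
    [TopologicalSpace.SeparableSpace H]
    (A : H →L[ℂ] H) (hA : A.IsPositive)
    (Cstar : ℝ) (hCstar : 0 < Cstar) (hAC : ‖A‖ ≤ Cstar)
    (lam : ℝ) (hlam : 0 < lam)
    (t k : ℕ) (γ : ℕ → ℝ)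
    (hγpos : ∀ j ∈ Finset.Icc t k, 0 < γ j)
    (hγ : ∀ j ∈ Finset.Icc t k, γ j * (Cstar + lam) ≤ 1)
    (α : ℝ) (hα : 0 < α) :
    ‖cfc (fun x : ℝ => x ^ α) A *
        (((List.range' t (k + 1 - t)).map
          (fun j => (1 : H →L[ℂ] H) - γ j • (A + lam • (1 : H →L[ℂ] H)))).prod)‖ ^ 2 ≤
      ((α / Real.exp 1) ^ (2 * α) + Cstar ^ (2 * α)) /
        (Real.exp (lam * ∑ j ∈ Finset.Icc t k, γ j) *
          (1 + (∑ j ∈ Finset.Icc t k, γ j) ^ (2 * α))) := by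
  set S := ∑ j ∈ Finset.Icc t k, γ j with hSdef
  have hS0 : 0 ≤ S := Finset.sum_nonneg fun j hj => (hγpos j hj).le
  have hRHS0 : 0 ≤ ((α / Real.exp 1) ^ (2 * α) + Cstar ^ (2 * α)) /
      (Real.exp (lam * S) * (1 + S ^ (2 * α))) := by positivity
  rcases subsingleton_or_nontrivial H with hsub | hnt
  · have hz : (cfc (fun x : ℝ => x ^ α) A *
        (((List.range' t (k + 1 - t)).map
          (fun j => (1 : H →L[ℂ] H) - γ j • (A + lam • (1 : H →L[ℂ] H)))).prod))
        = 0 := by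
      ext v
      exact Subsingleton.elim _ _
    rw [hz, norm_zero]
    simpa using hRHS0
  -- main case
  have hsa : IsSelfAdjoint A := hA.isSelfAdjoint
  have hspec : spectrum ℝ A ⊆ Set.Icc 0 Cstar := by
    intro x hx
    have h0 : (0:H→L[ℂ]H) ≤ A := (ContinuousLinearMap.nonneg_iff_isPositive A).mpr hA
    have hn : 0 ≤ x := spectrum_nonneg_of_nonneg h0 hx
    have := spectrum.norm_le_norm_of_mem hx
    rw [Real.norm_eq_abs, abs_of_nonneg hn] at this
    exact ⟨hn, this.trans hAC⟩
  set L := List.range' t (k + 1 - t) with hLdef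
  have hmem : ∀ j ∈ L, j ∈ Finset.Icc t k := by
    intro j hj
    rw [hLdef, List.mem_range'_1] at hj
    simp only [Finset.mem_Icc]
    omega
  have hSsum : S = (L.map γ).sum := by
    rw [hSdef, Nat.Icc_eq_range', Finset.sum]
    simp [hLdef]
  -- the factors as cfc
  set g : ℕ → ℝ → ℝ := fun j x => 1 - γ j * (x + lam) with hgdef
  have hgcont : ∀ j, Continuous (g j) := by
    intro j; rw [hgdef]; fun_prop
  have hfac : ∀ j, (1 : H →L[ℂ] H) - γ j • (A + lam • (1 : H →L[ℂ] H)) = cfc (g j) A := by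
    intro j
    have h1 : g j = fun x : ℝ => (1 - γ j * lam) - γ j * x := by
      funext x; rw [hgdef]; ring
    rw [h1, cfc_sub _ _ A, cfc_const_mul_id (γ j) A, cfc_const _ A,
      Algebra.algebraMap_eq_smul_one]
    rw [smul_add, sub_smul, one_smul, smul_smul]
    abel
  have hmap : L.map (fun j => (1 : H →L[ℂ] H) - γ j • (A + lam • (1 : H →L[ℂ] H)))
      = L.map (fun j => cfc (g j) A) := by
    apply List.map_congr_left
    intro j _
    exact hfac j
  rw [hmap, cfc_list_prod' A hsa g hgcont L]
  have hrpow : Continuous (fun x : ℝ => x ^ α) := by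
    rw [continuous_iff_continuousAt]
    intro x
    exact Real.continuousAt_rpow_const x α (Or.inr hα.le)
  rw [← cfc_mul _ _ A hrpow.continuousOn (cont_list_prod' g hgcont L).continuousOn]
  -- now norm bound via sqrt
  set B := ((α / Real.exp 1) ^ (2 * α) + Cstar ^ (2 * α)) /
      (Real.exp (lam * S) * (1 + S ^ (2 * α))) with hBdef
  have hnorm : ‖cfc (fun x : ℝ => x ^ α * (L.map (fun j => g j x)).prod) A‖ ≤ Real.sqrt B := by
    apply norm_cfc_le (Real.sqrt_nonneg B)
    intro x hx
    obtain ⟨hx0, hxC⟩ := hspec hx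
    have hp0 : 0 ≤ (L.map (fun j => g j x)).prod := by
      apply list_prod_nonneg'
      intro j hj
      have hj' := hmem j hj
      have h1 := hγ j hj'
      have h2 := hγpos j hj'
      rw [hgdef]
      have : γ j * (x + lam) ≤ γ j * (Cstar + lam) :=
        mul_le_mul_of_nonneg_left (by linarith) h2.le
      simp only
      nlinarith
    have hpe : (L.map (fun j => g j x)).prod ≤ Real.exp (-((x + lam) * S)) := by
      have hb : (L.map (fun j => g j x)).prod
          ≤ (L.map (fun j => Real.exp ((-(x + lam)) * γ j))).prod := by
        apply list_prod_le_prod' _ _ L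
        · intro j hj
          have hj' := hmem j hj
          have h1 := hγ j hj'
          have h2 := hγpos j hj'
          rw [hgdef]
          have : γ j * (x + lam) ≤ γ j * (Cstar + lam) :=
            mul_le_mul_of_nonneg_left (by linarith) h2.le
          simp only
          nlinarith
        · intro j hj
          rw [hgdef]
          simp only
          have := Real.add_one_le_exp (-(γ j * (x + lam)))
          calc 1 - γ j * (x + lam) = -(γ j * (x + lam)) + 1 := by ring
            _ ≤ Real.exp (-(γ j * (x + lam))) := this
            _ = Real.exp ((-(x + lam)) * γ j) := by ring_nf
      rw [list_prod_exp' γ (-(x + lam)) L] at hb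
      calc (L.map (fun j => g j x)).prod ≤ Real.exp ((-(x + lam)) * (L.map γ).sum) := hb
        _ = Real.exp (-((x + lam) * S)) := by rw [hSsum]; ring_nf
    have hkey := key_scalar' Cstar lam α S hlam hα hS0 x ((L.map (fun j => g j x)).prod)
      hx0 hxC hp0 hpe
    rw [Real.norm_eq_abs]
    have := Real.sqrt_le_sqrt hkey
    rwa [Real.sqrt_sq_eq_abs] at this
  calc ‖cfc (fun x : ℝ => x ^ α * (L.map (fun j => g j x)).prod) A‖ ^ 2
      ≤ (Real.sqrt B) ^ 2 := by
        apply pow_le_pow_left₀ (norm_nonneg _) hnorm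
    _ = B := Real.sq_sqrt (by positivity)
end

section
/- Let C* > 0, λ > 0, α > 0, and let x ∈ [0, C*]. Let γ_t, …, γ_k be positive reals with γ_j (C* + λ) ≤ 1 for all j. Define τ(x) = x^α ∏_{j=t}^{k} (1 − γ_j (x + λ)). Then 0 ≤ τ(x) and τ(x)² ≤ exp(−λ ∑_{j=t}^{k} γ_j) · ((α/e)^{2α} + C*^{2α}) / (1 + (∑_{j=t}^{k} γ_j)^{2α}). -/
lemma key_poly (α v : ℝ) (hα : 0 < α) (hv : 0 ≤ v) :
    v ^ (2*α) * Real.exp (-(2*v)) ≤ (α / Real.exp 1) ^ (2*α) := by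
  have hαe : (0:ℝ) < α / Real.exp 1 := by positivity
  rcases hv.eq_or_lt with h | h
  · rw [← h, Real.zero_rpow (by positivity)]
    simpa using Real.rpow_nonneg hαe.le (2*α)
  · rw [Real.rpow_def_of_pos h, Real.rpow_def_of_pos hαe, ← Real.exp_add, Real.exp_le_exp,
      Real.log_div (ne_of_gt hα) (Real.exp_ne_zero 1), Real.log_exp]
    have hlog : Real.log (v / α) ≤ v / α - 1 := Real.log_le_sub_one_of_pos (by positivity)
    rw [Real.log_div (ne_of_gt h) (ne_of_gt hα)] at hlog
    have h2 := mul_le_mul_of_nonneg_left hlog hα.le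
    have h3 : α * (v/α - 1) = v - α := by field_simp
    rw [h3] at h2
    nlinarith

/-- Pointwise polynomial estimate: for `x ∈ [0, C*]`,
`τ(x) = x^α ∏_{j=t}^k (1 − γ_j (x + λ))` satisfies `0 ≤ τ(x)` and
`τ(x)² ≤ exp(−λ ∑ γ_j) ((α/e)^{2α} + C*^{2α}) / (1 + (∑ γ_j)^{2α})`. -/
theorem stmt1 (Cstar lam α x : ℝ) (hCstar : 0 < Cstar) (hlam : 0 < lam) (hα : 0 < α)
    (hx0 : 0 ≤ x) (hxC : x ≤ Cstar)
    (t k : ℕ) (γ : ℕ → ℝ)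
    (hγpos : ∀ j ∈ Finset.Icc t k, 0 < γ j)
    (hγ : ∀ j ∈ Finset.Icc t k, γ j * (Cstar + lam) ≤ 1) :
    0 ≤ x ^ α * ∏ j ∈ Finset.Icc t k, (1 - γ j * (x + lam)) ∧
    (x ^ α * ∏ j ∈ Finset.Icc t k, (1 - γ j * (x + lam))) ^ 2 ≤
      Real.exp (-(lam * ∑ j ∈ Finset.Icc t k, γ j)) *
        (((α / Real.exp 1) ^ (2 * α) + Cstar ^ (2 * α)) /
          (1 + (∑ j ∈ Finset.Icc t k, γ j) ^ (2 * α))) := by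
  set S := ∑ j ∈ Finset.Icc t k, γ j with hSdef
  set P := ∏ j ∈ Finset.Icc t k, (1 - γ j * (x + lam)) with hPdef
  have hS : 0 ≤ S := Finset.sum_nonneg fun j hj => (hγpos j hj).le
  have hfac : ∀ j ∈ Finset.Icc t k, 0 ≤ 1 - γ j * (x + lam) := by
    intro j hj
    have h1 : γ j * (x + lam) ≤ γ j * (Cstar + lam) :=
      mul_le_mul_of_nonneg_left (by linarith) (hγpos j hj).le
    linarith [hγ j hj]
  have hP0 : 0 ≤ P := Finset.prod_nonneg hfac
  have hτ0 : 0 ≤ x ^ α * P := mul_nonneg (Real.rpow_nonneg hx0 α) hP0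
  refine ⟨hτ0, ?_⟩
  -- bound the product by the exponential
  have hPle : P ≤ Real.exp (-((x + lam) * S)) := by
    calc P ≤ ∏ j ∈ Finset.Icc t k, Real.exp (-(γ j * (x + lam))) := by
            refine Finset.prod_le_prod hfac fun j hj => ?_
            linarith [Real.add_one_le_exp (-(γ j * (x + lam)))]
      _ = Real.exp (∑ j ∈ Finset.Icc t k, -(γ j * (x + lam))) := (Real.exp_sum _ _).symm
      _ = Real.exp (-((x + lam) * S)) := by
            congr 1
            rw [hSdef, Finset.sum_neg_distrib, ← Finset.sum_mul]
            ring
  have hsq : (x ^ α) ^ 2 = x ^ (2*α) := by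
    rw [← Real.rpow_natCast (x ^ α) 2, ← Real.rpow_mul hx0]
    norm_num [mul_comm]
  have hden : (0:ℝ) < 1 + S ^ (2*α) := by positivity
  have hkey : x ^ (2*α) * Real.exp (-(2*(x*S))) * (1 + S ^ (2*α)) ≤
      (α / Real.exp 1) ^ (2*α) + Cstar ^ (2*α) := by
    have h1 : x ^ (2*α) * Real.exp (-(2*(x*S))) ≤ Cstar ^ (2*α) := by
      have : x ^ (2*α) ≤ Cstar ^ (2*α) := Real.rpow_le_rpow hx0 hxC (by positivity)
      have he : Real.exp (-(2*(x*S))) ≤ 1 := Real.exp_le_one_iff.mpr (by nlinarith)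
      nlinarith [Real.rpow_nonneg hx0 (2*α), Real.exp_pos (-(2*(x*S)))]
    have h2 : x ^ (2*α) * Real.exp (-(2*(x*S))) * S ^ (2*α) ≤ (α / Real.exp 1) ^ (2*α) := by
      have hmul : x ^ (2*α) * S ^ (2*α) = (x*S) ^ (2*α) := (Real.mul_rpow hx0 hS).symm
      calc x ^ (2*α) * Real.exp (-(2*(x*S))) * S ^ (2*α)
          = (x*S) ^ (2*α) * Real.exp (-(2*(x*S))) := by rw [← hmul]; ring
        _ ≤ (α / Real.exp 1) ^ (2*α) := key_poly α (x*S) hα (by positivity)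
    nlinarith
  calc (x ^ α * P) ^ 2 = x ^ (2*α) * P ^ 2 := by rw [mul_pow, hsq]
    _ ≤ x ^ (2*α) * Real.exp (-((x + lam) * S)) ^ 2 := by
        have := pow_le_pow_left₀ hP0 hPle 2
        nlinarith [Real.rpow_nonneg hx0 (2*α)]
    _ = Real.exp (-(lam * S)) * (x ^ (2*α) * Real.exp (-(2*(x*S)))) *
          Real.exp (-(lam*S)) := by
        rw [← Real.exp_nat_mul]
        have h : (2:ℕ) * -((x + lam) * S) = -(2*(x*S)) + (-(lam*S) + -(lam*S)) := by
          push_cast; ring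
        rw [h, Real.exp_add, Real.exp_add]
        ring
    _ ≤ Real.exp (-(lam * S)) * (x ^ (2*α) * Real.exp (-(2*(x*S)))) * 1 := by
        have h1 : Real.exp (-(lam*S)) ≤ 1 := Real.exp_le_one_iff.mpr (by nlinarith)
        have h2 : 0 ≤ Real.exp (-(lam * S)) * (x ^ (2*α) * Real.exp (-(2*(x*S)))) :=
          by positivity
        nlinarith
    _ ≤ Real.exp (-(lam * S)) *
        (((α / Real.exp 1) ^ (2 * α) + Cstar ^ (2 * α)) / (1 + S ^ (2 * α))) := by
        rw [mul_one]
        refine mul_le_mul_of_nonneg_left ?_ (Real.exp_pos _).le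
        rw [le_div_iff₀ hden]
        exact hkey
end

section
/- Let γ > 0, λ ≥ 0, 0 < s ≤ 1, and n ≥ 1 an integer. Then ∑_{i=1}^{n} γ² exp(−λ γ (n−i)) / (1 + (γ(n−i))^{2−s}) ≤ γ² + γ · ((2−s)/(1−s)) if 0 < s < 1, and ≤ γ² + γ log(1 + γ n) if s = 1. -/
open Real Finset

private lemma bern_aux {s t : ℝ} (hs0 : 0 < s) (hs1 : s < 1) (ht0 : 0 < t) (ht1 : t ≤ 1) :
    1 + (1 - s) * (1 - t) ≤ t ^ (s - 1) := by
  have hw1 : (0:ℝ) ≤ 1 - s := by linarith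
  have hgm : t ^ (1 - s) * 1 ^ s ≤ (1 - s) * t + s * 1 :=
    Real.geom_mean_le_arith_mean2_weighted hw1 hs0.le ht0.le zero_le_one (by ring)
  have h1 : t ^ (1 - s) ≤ 1 - (1 - s) * (1 - t) := by
    rw [Real.one_rpow, mul_one] at hgm; linarith
  have hpos : 0 < t ^ (1 - s) := Real.rpow_pos_of_pos ht0 _
  have hw0 : 0 ≤ (1 - s) * (1 - t) := mul_nonneg hw1 (by linarith)
  have hkey : (1 + (1 - s) * (1 - t)) * (t ^ (1 - s)) ≤ 1 := by
    calc (1 + (1-s)*(1-t)) * t ^ (1-s)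
        ≤ (1 + (1-s)*(1-t)) * (1 - (1-s)*(1-t)) := by
          apply mul_le_mul_of_nonneg_left h1; linarith
      _ = 1 - ((1-s)*(1-t))^2 := by ring
      _ ≤ 1 := by nlinarith [sq_nonneg ((1-s)*(1-t))]
  have heq : t ^ (s - 1) = 1 / t ^ (1 - s) := by
    rw [show s - 1 = -(1 - s) by ring, Real.rpow_neg ht0.le, one_div]
  rw [heq, le_div_iff₀ hpos]
  exact hkey

private lemma bern {s c d : ℝ} (hs0 : 0 < s) (hs1 : s < 1) (hc : 0 < c) (hcd : c ≤ d) :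
    (1 - s) * (d - c) * d ^ (s - 2) ≤ c ^ (s - 1) - d ^ (s - 1) := by
  have hd : 0 < d := hc.trans_le hcd
  have ht := bern_aux hs0 hs1 (div_pos hc hd) ((div_le_one hd).mpr hcd)
  have hdp : 0 < d ^ (s - 1) := Real.rpow_pos_of_pos hd _
  have h2 : (1 + (1 - s) * (1 - c / d)) * d ^ (s - 1) ≤ (c / d) ^ (s - 1) * d ^ (s - 1) :=
    mul_le_mul_of_nonneg_right ht hdp.le
  have h3 : (c / d) ^ (s - 1) * d ^ (s - 1) = c ^ (s - 1) := by
    rw [Real.div_rpow hc.le hd.le, div_mul_cancel₀]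
    exact hdp.ne'
  have h4 : (1 - c / d) * d ^ (s - 1) = (d - c) * d ^ (s - 2) := by
    have : d ^ (s - 1) = d ^ (s - 2) * d := by
      rw [← Real.rpow_add_one hd.ne']; ring_nf
    rw [this]
    field_simp
  nlinarith [h2, h3, h4]

noncomputable def Faux (s x : ℝ) : ℝ := if x ≤ 1 then x else 1 + (1 - x ^ (s - 1)) / (1 - s)

private lemma Faux_zero (s : ℝ) : Faux s 0 = 0 := by simp [Faux]

private lemma Faux_le {s x : ℝ} (hs0 : 0 < s) (hs1 : s < 1) (hx : 0 ≤ x) :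
    Faux s x ≤ (2 - s) / (1 - s) := by
  have h1s : (0:ℝ) < 1 - s := by linarith
  have hb : (2 - s) / (1 - s) = 1 + 1 / (1 - s) := by field_simp; ring
  unfold Faux
  split_ifs with h
  · rw [hb]
    have : 0 < 1 / (1 - s) := by positivity
    linarith
  · rw [hb]
    have hxp : (0:ℝ) ≤ x ^ (s - 1) := Real.rpow_nonneg hx _
    have : (1 - x ^ (s - 1)) / (1 - s) ≤ 1 / (1 - s) := by
      gcongr
      linarith
    linarith

private lemma Faux_step {s a b : ℝ} (hs0 : 0 < s) (hs1 : s < 1) (ha : 0 ≤ a) (hab : a ≤ b)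
    (hb : 0 < b) : (b - a) * min 1 (b ^ (s - 2)) ≤ Faux s b - Faux s a := by
  have h1s : (0:ℝ) < 1 - s := by linarith
  unfold Faux
  rcases le_or_gt b 1 with hb1 | hb1
  · rw [if_pos hb1, if_pos (hab.trans hb1)]
    have : min 1 (b ^ (s-2)) ≤ 1 := min_le_left _ _
    nlinarith
  · have hbs : b ^ (s - 2) ≤ 1 :=
      Real.rpow_le_one_of_one_le_of_nonpos hb1.le (by linarith)
    have hmin : min 1 (b ^ (s - 2)) = b ^ (s - 2) := min_eq_right hbs
    rw [hmin, if_neg (not_le.mpr hb1)]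
    rcases le_or_gt a 1 with ha1 | ha1
    · rw [if_pos ha1]
      have hber := bern hs0 hs1 one_pos hb1.le
      rw [Real.one_rpow] at hber
      have h5 : (b - 1) * b ^ (s - 2) ≤ (1 - b ^ (s - 1)) / (1 - s) := by
        rw [le_div_iff₀ h1s]; nlinarith
      have hbnn : 0 ≤ b ^ (s - 2) := Real.rpow_nonneg hb.le _
      have h6 : (1 - a) * b ^ (s - 2) ≤ 1 - a := by nlinarith
      nlinarith
    · rw [if_neg (not_le.mpr ha1)]
      have hber := bern hs0 hs1 (lt_trans one_pos ha1) hab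
      have : (b - a) * b ^ (s - 2) ≤ (a ^ (s - 1) - b ^ (s - 1)) / (1 - s) := by
        rw [le_div_iff₀ h1s]; nlinarith
      calc (b - a) * b ^ (s - 2) ≤ (a ^ (s - 1) - b ^ (s - 1)) / (1 - s) := this
        _ = 1 + (1 - b ^ (s-1)) / (1-s) - (1 + (1 - a ^ (s-1)) / (1-s)) := by ring

/-- For constant step-size `γ > 0`, `λ ≥ 0`, `0 < s ≤ 1`, `n ≥ 1`:
`∑_{i=1}^n γ² exp(−λγ(n−i))/(1+(γ(n−i))^{2−s})` is at most `γ² + γ (2−s)/(1−s)`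
when `s < 1`, and at most `γ² + γ log(1+γn)` when `s = 1`. -/
theorem stmt10 (γ lam s : ℝ) (hγ : 0 < γ) (hlam : 0 ≤ lam) (hs0 : 0 < s) (hs1 : s ≤ 1)
    (n : ℕ) (hn : 1 ≤ n) :
    (s < 1 →
      ∑ i ∈ Finset.Icc 1 n,
          γ ^ 2 * Real.exp (-(lam * γ * ((n : ℝ) - (i : ℝ)))) /
            (1 + (γ * ((n : ℝ) - (i : ℝ))) ^ (2 - s)) ≤
        γ ^ 2 + γ * ((2 - s) / (1 - s))) ∧
    (s = 1 →
      ∑ i ∈ Finset.Icc 1 n,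
          γ ^ 2 * Real.exp (-(lam * γ * ((n : ℝ) - (i : ℝ)))) /
            (1 + (γ * ((n : ℝ) - (i : ℝ))) ^ (2 - s)) ≤
        γ ^ 2 + γ * Real.log (1 + γ * (n : ℝ))) := by
  have hs2 : (0:ℝ) < 2 - s := by linarith
  -- reindex the sum
  have hre : ∑ i ∈ Finset.Icc 1 n,
      γ ^ 2 * Real.exp (-(lam * γ * ((n : ℝ) - (i : ℝ)))) /
        (1 + (γ * ((n : ℝ) - (i : ℝ))) ^ (2 - s))
      = ∑ k ∈ Finset.range n,
      γ ^ 2 * Real.exp (-(lam * γ * (k : ℝ))) / (1 + (γ * (k : ℝ)) ^ (2 - s)) := by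
    apply Finset.sum_nbij' (fun i => n - i) (fun k => n - k)
    · intro i hi
      simp only [Finset.mem_Icc] at hi
      simp only [Finset.mem_range]
      omega
    · intro k hk
      simp only [Finset.mem_range] at hk
      simp only [Finset.mem_Icc]
      omega
    · intro i hi; simp only [Finset.mem_Icc] at hi; omega
    · intro k hk; simp only [Finset.mem_range] at hk; omega
    · intro i hi
      simp only [Finset.mem_Icc] at hi
      have : ((n - i : ℕ) : ℝ) = (n : ℝ) - (i : ℝ) := by
        push_cast [Nat.cast_sub hi.2]; ring
      rw [this]
  rw [hre]
  -- pointwise drop the exponential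
  have hden : ∀ x : ℝ, 0 ≤ x → (0:ℝ) < 1 + x ^ (2 - s) := by
    intro x hx
    have := Real.rpow_nonneg hx (2 - s)
    linarith
  have hstep1 : ∑ k ∈ Finset.range n,
      γ ^ 2 * Real.exp (-(lam * γ * (k : ℝ))) / (1 + (γ * (k : ℝ)) ^ (2 - s))
      ≤ ∑ k ∈ Finset.range n, γ ^ 2 / (1 + (γ * (k : ℝ)) ^ (2 - s)) := by
    apply Finset.sum_le_sum
    intro k _
    have hk0 : (0:ℝ) ≤ γ * k := by positivity
    have hd := hden _ hk0
    have hexp : Real.exp (-(lam * γ * (k:ℝ))) ≤ 1 := Real.exp_le_one_iff.mpr (neg_nonpos.mpr (by positivity))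
    have hnum : γ ^ 2 * Real.exp (-(lam * γ * (k:ℝ))) ≤ γ ^ 2 := by
      nlinarith [sq_nonneg γ, Real.exp_pos (-(lam * γ * (k:ℝ)))]
    gcongr
  -- split off the k = 0 term
  obtain ⟨m, rfl⟩ : ∃ m, n = m + 1 := ⟨n - 1, by omega⟩
  have hzero : γ ^ 2 / (1 + (γ * ((0:ℕ) : ℝ)) ^ (2 - s)) = γ ^ 2 := by
    norm_num [Real.zero_rpow hs2.ne']
  have hsplit : ∑ k ∈ Finset.range (m + 1), γ ^ 2 / (1 + (γ * (k : ℝ)) ^ (2 - s))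
      = (∑ k ∈ Finset.range m, γ ^ 2 / (1 + (γ * ((k + 1 : ℕ) : ℝ)) ^ (2 - s))) + γ ^ 2 := by
    rw [Finset.sum_range_succ']
    push_cast
    push_cast at hzero
    rw [hzero]
  rw [hsplit] at hstep1
  constructor
  · -- case s < 1
    intro hslt
    have htail : ∑ k ∈ Finset.range m, γ ^ 2 / (1 + (γ * ((k + 1 : ℕ) : ℝ)) ^ (2 - s))
        ≤ γ * ((2 - s) / (1 - s)) := by
      have hterm : ∀ k ∈ Finset.range m,
          γ ^ 2 / (1 + (γ * ((k + 1 : ℕ) : ℝ)) ^ (2 - s))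
          ≤ γ * (Faux s (γ * ((k + 1 : ℕ) : ℝ)) - Faux s (γ * (k : ℕ))) := by
        intro k _
        set b : ℝ := γ * ((k + 1 : ℕ) : ℝ) with hbdef
        set a : ℝ := γ * ((k : ℕ) : ℝ) with hadef
        have hb : 0 < b := by positivity
        have ha : 0 ≤ a := by positivity
        have hab : a ≤ b := by
          rw [hadef, hbdef]; push_cast; nlinarith
        have hba : b - a = γ := by rw [hadef, hbdef]; push_cast; ring
        have hbs : 0 < b ^ (2 - s) := Real.rpow_pos_of_pos hb _
        have hmin : 1 / (1 + b ^ (2 - s)) ≤ min 1 (b ^ (s - 2)) := by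
          apply le_min
          · rw [div_le_one (by linarith)]; linarith
          · have : b ^ (s - 2) = 1 / b ^ (2 - s) := by
              rw [show s - 2 = -(2 - s) by ring, Real.rpow_neg hb.le, one_div]
            rw [this]
            exact one_div_le_one_div_of_le hbs (by linarith)
        have hF := Faux_step hs0 hslt ha hab hb
        calc γ ^ 2 / (1 + b ^ (2 - s)) = γ * (γ * (1 / (1 + b ^ (2 - s)))) := by ring
          _ ≤ γ * (γ * min 1 (b ^ (s - 2))) :=
              mul_le_mul_of_nonneg_left (mul_le_mul_of_nonneg_left hmin hγ.le) hγ.le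
          _ = γ * ((b - a) * min 1 (b ^ (s - 2))) := by rw [hba]
          _ ≤ γ * (Faux s b - Faux s a) := mul_le_mul_of_nonneg_left hF hγ.le
      calc ∑ k ∈ Finset.range m, γ ^ 2 / (1 + (γ * ((k + 1 : ℕ) : ℝ)) ^ (2 - s))
          ≤ ∑ k ∈ Finset.range m,
            γ * (Faux s (γ * ((k + 1 : ℕ) : ℝ)) - Faux s (γ * (k : ℕ))) :=
            Finset.sum_le_sum hterm
        _ = γ * (Faux s (γ * (m : ℕ)) - Faux s (γ * ((0:ℕ) : ℝ))) := by
            rw [← Finset.mul_sum]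
            congr 1
            exact Finset.sum_range_sub (fun k => Faux s (γ * (k : ℕ))) m
        _ ≤ γ * ((2 - s) / (1 - s)) := by
            have h0 : Faux s (γ * ((0:ℕ) : ℝ)) = 0 := by
              norm_num [Faux_zero]
            rw [h0, sub_zero]
            exact mul_le_mul_of_nonneg_left (Faux_le hs0 hslt (by positivity)) hγ.le
    linarith
  · -- case s = 1
    intro hseq
    subst hseq
    have h21 : (2:ℝ) - 1 = 1 := by norm_num
    simp only [h21, Real.rpow_one] at hstep1 hsplit ⊢
    have htail : ∑ k ∈ Finset.range m, γ ^ 2 / (1 + γ * ((k + 1 : ℕ) : ℝ))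
        ≤ γ * Real.log (1 + γ * ((m + 1 : ℕ) : ℝ)) := by
      have hterm : ∀ k ∈ Finset.range m,
          γ ^ 2 / (1 + γ * ((k + 1 : ℕ) : ℝ))
          ≤ γ * (Real.log (1 + γ * ((k + 1 : ℕ) : ℝ)) - Real.log (1 + γ * ((k : ℕ) : ℝ))) := by
        intro k _
        have hk0 : (0:ℝ) ≤ γ * (k : ℕ) := by positivity
        have hk1 : (0:ℝ) < 1 + γ * ((k : ℕ) : ℝ) := by linarith
        have hk2 : (0:ℝ) < 1 + γ * ((k + 1 : ℕ) : ℝ) := by positivity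
        have hlog := Real.log_le_sub_one_of_pos (div_pos hk1 hk2)
        rw [Real.log_div hk1.ne' hk2.ne'] at hlog
        have h1 : (1 + γ * ((k : ℕ) : ℝ)) / (1 + γ * ((k + 1 : ℕ) : ℝ)) - 1
            = -(γ / (1 + γ * ((k + 1 : ℕ) : ℝ))) := by
          field_simp
          push_cast
          ring
        rw [h1] at hlog
        have h2 : γ / (1 + γ * ((k + 1 : ℕ) : ℝ))
            ≤ Real.log (1 + γ * ((k + 1 : ℕ) : ℝ)) - Real.log (1 + γ * ((k : ℕ) : ℝ)) := by
          linarith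
        calc γ ^ 2 / (1 + γ * ((k + 1 : ℕ) : ℝ)) = γ * (γ / (1 + γ * ((k + 1 : ℕ) : ℝ))) := by
              ring
          _ ≤ γ * (Real.log (1 + γ * ((k + 1 : ℕ) : ℝ)) - Real.log (1 + γ * ((k : ℕ) : ℝ))) :=
              mul_le_mul_of_nonneg_left h2 hγ.le
      calc ∑ k ∈ Finset.range m, γ ^ 2 / (1 + γ * ((k + 1 : ℕ) : ℝ))
          ≤ ∑ k ∈ Finset.range m,
            γ * (Real.log (1 + γ * ((k + 1 : ℕ) : ℝ)) - Real.log (1 + γ * ((k : ℕ) : ℝ))) :=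
            Finset.sum_le_sum hterm
        _ = γ * (Real.log (1 + γ * ((m : ℕ) : ℝ)) - Real.log (1 + γ * ((0:ℕ) : ℝ))) := by
            rw [← Finset.mul_sum]
            congr 1
            exact Finset.sum_range_sub (fun k => Real.log (1 + γ * ((k : ℕ) : ℝ))) m
        _ ≤ γ * Real.log (1 + γ * ((m + 1 : ℕ) : ℝ)) := by
            have h0 : Real.log (1 + γ * ((0:ℕ) : ℝ)) = 0 := by norm_num
            rw [h0, sub_zero]
            refine mul_le_mul_of_nonneg_left (Real.log_le_log (by positivity) ?_) hγ.le
            push_cast; nlinarith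
    norm_num at hstep1 htail ⊢
    linarith
end

section
/- Let T be a bounded self-adjoint positive operator on a Hilbert space H, λ > 0, 0 < θ ≤ 1, and g ∈ H. Define h = (λ I + T)^{−1} T^{1+θ} g and h* = T^{θ} g. Then ‖h − h*‖ ≤ λ^{θ} ‖g‖. -/
/-- Let `T` be a bounded self-adjoint positive operator on a Hilbert
space `H`, `λ > 0`, `0 < θ ≤ 1` and `g ∈ H`.  With `h = (λI + T)⁻¹ T^{1+θ} g` and
`h* = T^θ g`, one has `‖h − h*‖ ≤ λ^θ ‖g‖`. -/
theorem stmt16 {H : Type*} [NormedAddCommGroup H] [InnerProductSpace ℂ H] [CompleteSpace H]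
    (T : H →L[ℂ] H) (hT : T.IsPositive)
    (lam θ : ℝ) (hlam : 0 < lam) (hθ0 : 0 < θ) (hθ1 : θ ≤ 1) (g : H) :
    ‖(Ring.inverse (lam • (1 : H →L[ℂ] H) + T) * cfc (fun x : ℝ => x ^ (1 + θ)) T) g -
        (cfc (fun x : ℝ => x ^ θ) T) g‖ ≤ lam ^ θ * ‖g‖ := by
  have hsa : IsSelfAdjoint T := hT.isSelfAdjoint
  have hTnn : (0 : H →L[ℂ] H) ≤ T := (ContinuousLinearMap.nonneg_iff_isPositive T).mpr hT
  have hspec : ∀ x ∈ spectrum ℝ T, (0:ℝ) ≤ x := fun x hx => spectrum_nonneg_of_nonneg hTnn hx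
  have hne : ∀ x ∈ spectrum ℝ T, lam + x ≠ 0 := fun x hx =>
    (add_pos_of_pos_of_nonneg hlam (hspec x hx)).ne'
  have hcont_inv : ContinuousOn (fun x : ℝ => (lam + x)⁻¹) (spectrum ℝ T) :=
    ContinuousOn.inv₀ (by fun_prop) hne
  -- `lam • 1 + T` as a cfc
  have hA : lam • (1 : H →L[ℂ] H) + T = cfc (fun x : ℝ => lam + x) T := by
    rw [cfc_const_add lam (fun x : ℝ => x) T (by fun_prop) hsa, cfc_id' ℝ T,
      Algebra.algebraMap_eq_smul_one]
  -- its inverse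
  have hmul1 : cfc (fun x : ℝ => lam + x) T * cfc (fun x : ℝ => (lam + x)⁻¹) T = 1 := by
    rw [← cfc_mul _ _ T (by fun_prop) hcont_inv,
      cfc_congr (g := fun _ : ℝ => (1:ℝ)) (fun x hx => mul_inv_cancel₀ (hne x hx)),
      cfc_const (1:ℝ) T hsa, map_one]
  have hmul2 : cfc (fun x : ℝ => (lam + x)⁻¹) T * cfc (fun x : ℝ => lam + x) T = 1 := by
    rw [← cfc_mul _ _ T hcont_inv (by fun_prop),
      cfc_congr (g := fun _ : ℝ => (1:ℝ)) (fun x hx => inv_mul_cancel₀ (hne x hx)),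
      cfc_const (1:ℝ) T hsa, map_one]
  have hinv : Ring.inverse (lam • (1 : H →L[ℂ] H) + T) = cfc (fun x : ℝ => (lam + x)⁻¹) T := by
    rw [hA]
    exact Ring.inverse_unit ⟨_, _, hmul1, hmul2⟩
  have hθ1' : (0:ℝ) ≤ 1 + θ := by linarith
  -- the whole operator as a single cfc
  set f : ℝ → ℝ := fun x => (lam + x)⁻¹ * x ^ (1 + θ) - x ^ θ with hf
  have hop : Ring.inverse (lam • (1 : H →L[ℂ] H) + T) * cfc (fun x : ℝ => x ^ (1 + θ)) T -
      cfc (fun x : ℝ => x ^ θ) T = cfc f T := by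
    rw [hinv, ← cfc_mul _ _ T hcont_inv (Real.continuous_rpow_const hθ1').continuousOn,
      ← cfc_sub (fun x : ℝ => (lam + x)⁻¹ * x ^ (1 + θ)) (fun x : ℝ => x ^ θ) T
        (hcont_inv.mul (Real.continuous_rpow_const hθ1').continuousOn)
        (Real.continuous_rpow_const hθ0.le).continuousOn]
  -- pointwise bound on the spectrum
  have hbound : ∀ x ∈ spectrum ℝ T, ‖f x‖ ≤ lam ^ θ := by
    intro x hx
    have hx0 := hspec x hx
    have hd : 0 < lam + x := add_pos_of_pos_of_nonneg hlam hx0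
    have hsplit : x ^ (1 + θ) = x * x ^ θ := by
      rw [Real.rpow_add' hx0 (by linarith), Real.rpow_one]
    have hval : f x = -(lam * x ^ θ / (lam + x)) := by
      rw [hf]; field_simp [hsplit]; rw [hsplit]; ring
    rw [hval, norm_neg, Real.norm_of_nonneg (by positivity)]
    rw [div_le_iff₀ hd]
    have hgm : lam ^ (1 - θ) * x ^ θ ≤ (1 - θ) * lam + θ * x :=
      Real.geom_mean_le_arith_mean2_weighted (by linarith) hθ0.le hlam.le hx0 (by ring)
    have hlam' : lam ^ θ * lam ^ (1 - θ) = lam := by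
      rw [← Real.rpow_add hlam]; norm_num
    have hxθ : (0:ℝ) ≤ x ^ θ := Real.rpow_nonneg hx0 θ
    calc lam * x ^ θ = lam ^ θ * (lam ^ (1 - θ) * x ^ θ) := by rw [← mul_assoc, hlam']
      _ ≤ lam ^ θ * ((1 - θ) * lam + θ * x) := by
          exact mul_le_mul_of_nonneg_left hgm (Real.rpow_nonneg hlam.le θ)
      _ ≤ lam ^ θ * (lam + x) := by
          have : (1 - θ) * lam + θ * x ≤ lam + x := by nlinarith
          exact mul_le_mul_of_nonneg_left this (Real.rpow_nonneg hlam.le θ)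
  have hnorm : ‖cfc f T‖ ≤ lam ^ θ :=
    norm_cfc_le (Real.rpow_nonneg hlam.le θ) hbound
  calc ‖(Ring.inverse (lam • (1 : H →L[ℂ] H) + T) * cfc (fun x : ℝ => x ^ (1 + θ)) T) g -
        (cfc (fun x : ℝ => x ^ θ) T) g‖
      = ‖(cfc f T) g‖ := by rw [← hop]; rfl
    _ ≤ ‖cfc f T‖ * ‖g‖ := (cfc f T).le_opNorm g
    _ ≤ lam ^ θ * ‖g‖ := by
        exact mul_le_mul_of_nonneg_right hnorm (norm_nonneg g)
end

section
/- Let λ > 0, ν > 1, γ₁ ∈ (0,1), 0 < μ < 1, and γ_j = γ₁ j^{−μ}. Then there is a constant C (depending only on μ, ν, γ₁, but not on k or λ) such that for all integers k ≥ 1, ∑_{i=1}^{k} γ_i² exp(−λ ∑_{j=i+1}^{k} γ_j) / (1 + (∑_{j=i+1}^{k} γ_j)^{ν}) ≤ C γ₁ ( exp(−λ γ₁ d_μ k^{1−μ}) k^{−min{μ, ν(1−μ)}} + k^{−μ} ), where d_μ = (1 − 2^{μ−1})/(1−μ). -/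
open Finset



/-- antitone rpow on positive interval -/
lemma antitoneOn_rpow_nonpos {p : ℝ} (hp : p ≤ 0) {a b : ℝ} (ha : 0 < a) :
    AntitoneOn (fun x : ℝ => x ^ p) (Set.Icc a b) := by
  intro x hx y hy hxy
  exact Real.rpow_le_rpow_of_nonpos (lt_of_lt_of_le ha hx.1) hxy hp

/-- Upper bound of a tail sum of `j^p` (`p < 0`, `p ≠ -1`) by the integral. -/
lemma sum_Icc_rpow_le {p : ℝ} (hp : p < 0) (hp1 : p ≠ -1) {a b : ℕ} (ha : 1 ≤ a)
    (hab : a ≤ b) :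
    ∑ j ∈ Icc (a + 1) b, (j : ℝ) ^ p ≤ ((b : ℝ) ^ (p + 1) - (a : ℝ) ^ (p + 1)) / (p + 1) := by
  have ha' : (0 : ℝ) < a := by exact_mod_cast ha
  have hint : (∫ x in (a : ℝ)..(b : ℝ), x ^ p)
      = ((b : ℝ) ^ (p + 1) - (a : ℝ) ^ (p + 1)) / (p + 1) := by
    rw [integral_rpow (Or.inr ⟨hp1, by
      rw [Set.uIcc_of_le (by exact_mod_cast hab)]
      intro h
      exact absurd h.1 (by push_neg; exact ha')⟩)]
  rw [← hint]
  have h2 : ∑ j ∈ Icc (a + 1) b, (j : ℝ) ^ p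
      = ∑ x ∈ Ico a b, ((x + 1 : ℕ) : ℝ) ^ p := by
    rw [Finset.sum_Ico_add' (fun n : ℕ => (n : ℝ) ^ p) a b 1, Finset.Ico_add_one_right_eq_Icc]
  rw [h2]
  exact AntitoneOn.sum_le_integral_Ico hab (antitoneOn_rpow_nonpos hp.le ha')

/-- Lower bound of a tail sum of `j^p` (`-1 < p < 0`) by the integral. -/
lemma integral_le_sum_Icc_rpow {p : ℝ} (hp : -1 < p) (hp0 : p < 0) {a b : ℕ}
    (hab : a ≤ b) :
    (((b : ℝ) + 1) ^ (p + 1) - ((a : ℝ) + 1) ^ (p + 1)) / (p + 1)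
      ≤ ∑ j ∈ Icc (a + 1) b, (j : ℝ) ^ p := by
  have hint : (∫ x in ((a + 1 : ℕ) : ℝ)..((b + 1 : ℕ) : ℝ), x ^ p)
      = (((b : ℝ) + 1) ^ (p + 1) - ((a : ℝ) + 1) ^ (p + 1)) / (p + 1) := by
    rw [integral_rpow (Or.inl hp)]
    push_cast
    ring_nf
  rw [← hint, ← Finset.Ico_add_one_right_eq_Icc]
  exact AntitoneOn.integral_le_sum_Ico (by omega)
    (antitoneOn_rpow_nonpos hp0.le (by positivity))



/-- `∑_{i=1}^k i^{t-1} ≤ (1+1/t) k^t` for `t > 0`. -/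
lemma sum_rpow_sub_one_le {t : ℝ} (ht : 0 < t) {k : ℕ} (hk : 1 ≤ k) :
    ∑ i ∈ Icc 1 k, (i : ℝ) ^ (t - 1) ≤ (1 + 1 / t) * (k : ℝ) ^ t := by
  have hk' : (1 : ℝ) ≤ k := by exact_mod_cast hk
  have hkt : (1 : ℝ) ≤ (k : ℝ) ^ t := Real.one_le_rpow hk' ht.le
  rcases le_or_gt 1 t with h1 | h1
  · -- each term ≤ k^(t-1)
    calc ∑ i ∈ Icc 1 k, (i : ℝ) ^ (t - 1)
        ≤ ∑ _i ∈ Icc 1 k, (k : ℝ) ^ (t - 1) := by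
          refine Finset.sum_le_sum fun i hi => ?_
          have hi' := (Finset.mem_Icc.mp hi)
          have : (0:ℝ) < i := by exact_mod_cast hi'.1
          exact Real.rpow_le_rpow this.le (by exact_mod_cast hi'.2) (by linarith)
      _ = (k : ℝ) * (k : ℝ) ^ (t - 1) := by
          rw [Finset.sum_const, Nat.card_Icc]
          simp [nsmul_eq_mul]
      _ = (k : ℝ) ^ t := by
          rw [show ((k:ℝ)) * (k : ℝ) ^ (t - 1) = (k:ℝ) ^ (1:ℝ) * (k : ℝ) ^ (t-1) by
            rw [Real.rpow_one], ← Real.rpow_add (by positivity)]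
          norm_num
      _ ≤ (1 + 1 / t) * (k : ℝ) ^ t := by nlinarith [one_div_pos.mpr ht]
  · -- integral comparison
    have hsplit : ∑ i ∈ Icc 1 k, (i : ℝ) ^ (t - 1)
        = 1 + ∑ i ∈ Icc 2 k, (i : ℝ) ^ (t - 1) := by
      rw [← Finset.Ico_add_one_right_eq_Icc, Finset.sum_eq_sum_Ico_succ_bot (by omega),
        Finset.Ico_add_one_right_eq_Icc]
      norm_num
    have hbound := sum_Icc_rpow_le (p := t - 1) (by linarith) (by intro h; linarith)
      (a := 1) (b := k) le_rfl hk
    rw [hsplit]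
    have : t - 1 + 1 = t := by ring
    rw [this] at hbound
    norm_num at hbound
    have hkey : (1 + 1 / t) * (k:ℝ) ^ t - (1 + ((k : ℝ) ^ t - 1) / t)
        = (k:ℝ) ^ t - 1 + 1 / t := by
      field_simp
      ring
    have h1t : 0 < 1 / t := by positivity
    linarith


lemma aux1 {ν μ : ℝ} (hν : 1 < ν) (hμ0 : 0 < μ) (hμ1 : μ < 1) :
    ∃ C₁ > (0:ℝ), ∀ k : ℕ, 1 ≤ k →
      ∑ i ∈ Icc 1 k, (i : ℝ) ^ (-(2*μ)) ≤
        C₁ * ((k : ℝ) ^ (ν*(1-μ)) * (k : ℝ) ^ (-min μ (ν*(1-μ)))) := by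
  have hmin : min μ (ν*(1-μ)) ≤ μ := min_le_left _ _
  have hmin2 : min μ (ν*(1-μ)) ≤ ν*(1-μ) := min_le_right _ _
  rcases le_or_gt (2*μ) 1 with hc | hc
  · set ε := (ν - 1) * (1 - μ) / 2 with hε
    have hε0 : 0 < ε := by
      have : 0 < (ν - 1) * (1 - μ) := by nlinarith
      positivity
    set t := 1 - 2*μ + ε with htdef
    have ht : 0 < t := by simp only [htdef]; linarith
    refine ⟨1 + 1/t, by positivity, fun k hk => ?_⟩
    have hk0 : (0:ℝ) < k := by exact_mod_cast hk
    have hk1 : (1:ℝ) ≤ k := by exact_mod_cast hk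
    calc ∑ i ∈ Icc 1 k, (i : ℝ) ^ (-(2*μ))
        ≤ ∑ i ∈ Icc 1 k, (i : ℝ) ^ (t - 1) := by
          refine Finset.sum_le_sum fun i hi => ?_
          have hi1 : (1:ℝ) ≤ i := by exact_mod_cast (Finset.mem_Icc.mp hi).1
          exact Real.rpow_le_rpow_of_exponent_le hi1 (by simp only [htdef]; linarith)
      _ ≤ (1 + 1/t) * (k:ℝ) ^ t := sum_rpow_sub_one_le ht hk
      _ ≤ (1 + 1/t) * (k:ℝ) ^ (ν*(1-μ) - min μ (ν*(1-μ))) := by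
          have hle : t ≤ ν*(1-μ) - min μ (ν*(1-μ)) := by
            have : t = 1 - 2*μ + ε := rfl
            have hε2 : 2*ε = (ν-1)*(1-μ) := by simp only [hε]; ring
            nlinarith
          exact mul_le_mul_of_nonneg_left (Real.rpow_le_rpow_of_exponent_le hk1 hle)
            (by positivity)
      _ = (1 + 1/t) * ((k : ℝ) ^ (ν*(1-μ)) * (k : ℝ) ^ (-min μ (ν*(1-μ)))) := by
          rw [← Real.rpow_add hk0]; ring_nf
  · have h21 : (0:ℝ) < 2*μ - 1 := by linarith
    have h21' : (0:ℝ) < 1/(2*μ-1) := one_div_pos.mpr h21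
    refine ⟨1 + 1/(2*μ - 1), by linarith, fun k hk => ?_⟩
    have hk0 : (0:ℝ) < k := by exact_mod_cast hk
    have hk1 : (1:ℝ) ≤ k := by exact_mod_cast hk
    have hsplit : ∑ i ∈ Icc 1 k, (i : ℝ) ^ (-(2*μ))
        = 1 + ∑ i ∈ Icc 2 k, (i : ℝ) ^ (-(2*μ)) := by
      rw [← Finset.Ico_add_one_right_eq_Icc, Finset.sum_eq_sum_Ico_succ_bot (by omega),
        Finset.Ico_add_one_right_eq_Icc]
      norm_num
    have hb := sum_Icc_rpow_le (p := -(2*μ)) (by linarith) (by intro h; linarith)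
      (a := 1) (b := k) le_rfl hk
    norm_num at hb
    have hkpos : (0:ℝ) < (k:ℝ) ^ (-(2*μ) + 1) := Real.rpow_pos_of_pos hk0 _
    have hsum : ∑ i ∈ Icc 1 k, (i : ℝ) ^ (-(2*μ)) ≤ 1 + 1/(2*μ - 1) := by
      rw [hsplit]
      have heq : ((k:ℝ) ^ (-(2*μ) + 1) - 1) / (-(2*μ) + 1)
          = (1 - (k:ℝ) ^ (-(2*μ) + 1)) / (2*μ-1) := by
        rw [div_eq_div_iff (by linarith) (by linarith : (0:ℝ) < 2*μ-1).ne']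
        ring
      have : ((k:ℝ) ^ (-(2*μ) + 1) - 1) / (-(2*μ) + 1) ≤ 1/(2*μ-1) := by
        rw [heq, div_le_div_iff₀ h21 h21]
        nlinarith
      linarith
    have hexp : (1:ℝ) ≤ (k : ℝ) ^ (ν*(1-μ)) * (k : ℝ) ^ (-min μ (ν*(1-μ))) := by
      rw [← Real.rpow_add hk0]
      exact Real.one_le_rpow hk1 (by linarith)
    nlinarith [hsum, hexp, h21']


lemma aux2 {ν : ℝ} (hν : 1 < ν) {B : ℝ} (hB0 : 0 < B) (hB1 : B ≤ 1) (k : ℕ) :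
    ∑ m ∈ range k, 1 / (1 + (B * m) ^ ν) ≤ (3 + 1/(ν-1)) / B := by
  have hν1 : (0:ℝ) < ν - 1 := by linarith
  have hinvB : (1:ℝ) ≤ 1/B := by rw [le_div_iff₀ hB0]; linarith
  have h2B : (2:ℝ) ≤ 2/B := by rw [le_div_iff₀ hB0]; linarith
  have hRHS : 1/B + 2 ≤ (3 + 1/(ν-1)) / B := by
    have hc : (0:ℝ) ≤ (1/(ν-1))/B := by positivity
    have he : (3 + 1/(ν-1))/B = 1/B + 2/B + (1/(ν-1))/B := by ring
    linarith
  set M := ⌈1/B⌉₊ with hM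
  have hM1 : 1 ≤ M := Nat.one_le_ceil_iff.mpr (by linarith)
  have hMB : 1/B ≤ (M:ℝ) := Nat.le_ceil _
  have hMB2 : (M:ℝ) ≤ 1/B + 1 := le_of_lt (Nat.ceil_lt_add_one (by positivity))
  have hterm1 : ∀ m : ℕ, 1 / (1 + (B * m) ^ ν) ≤ 1 := by
    intro m
    rw [div_le_one (by positivity)]
    nlinarith [Real.rpow_nonneg (by positivity : (0:ℝ) ≤ B * m) ν]
  rcases le_or_gt k (M+1) with hk | hk
  · calc ∑ m ∈ range k, 1 / (1 + (B * m) ^ ν)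
        ≤ ∑ _m ∈ range k, (1:ℝ) := Finset.sum_le_sum fun m _ => hterm1 m
      _ = (k:ℝ) := by simp
      _ ≤ (M:ℝ) + 1 := by exact_mod_cast hk
      _ ≤ 1/B + 2 := by linarith
      _ ≤ (3 + 1/(ν-1)) / B := hRHS
  · have hk1 : 1 ≤ k := by omega
    rw [Finset.range_eq_Ico,
      ← Finset.sum_Ico_consecutive _ (show 0 ≤ M+1 by omega) (le_of_lt hk)]
    have hfirst : ∑ m ∈ Ico 0 (M+1), 1 / (1 + (B * m) ^ ν) ≤ (M:ℝ) + 1 := by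
      calc ∑ m ∈ Ico 0 (M+1), 1 / (1 + (B * m) ^ ν)
          ≤ ∑ _m ∈ Ico 0 (M+1), (1:ℝ) := Finset.sum_le_sum fun m _ => hterm1 m
        _ = ((M:ℝ) + 1) := by simp
    have hsecond : ∑ m ∈ Ico (M+1) k, 1 / (1 + (B * m) ^ ν) ≤ (1/B) / (ν-1) := by
      have hstep : ∀ m ∈ Ico (M+1) k, 1 / (1 + (B * m) ^ ν)
          ≤ B ^ (-ν) * (m:ℝ) ^ (-ν) := by
        intro m hm
        have hm1 : 1 ≤ m := le_trans (by omega) (Finset.mem_Ico.mp hm).1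
        have hm0 : (0:ℝ) < m := by exact_mod_cast hm1
        have hx : (0:ℝ) < (B * m) ^ ν := Real.rpow_pos_of_pos (by positivity) ν
        have h1 : 1 / (1 + (B * m) ^ ν) ≤ 1 / (B * m) ^ ν :=
          one_div_le_one_div_of_le hx (by linarith)
        have h2 : 1 / (B * m) ^ ν = B ^ (-ν) * (m:ℝ) ^ (-ν) := by
          rw [Real.mul_rpow (by positivity) (by positivity), Real.rpow_neg hB0.le,
            Real.rpow_neg hm0.le, one_div, mul_inv]
        rw [← h2]; exact h1
      calc ∑ m ∈ Ico (M+1) k, 1 / (1 + (B * m) ^ ν)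
          ≤ ∑ m ∈ Ico (M+1) k, B ^ (-ν) * (m:ℝ) ^ (-ν) := Finset.sum_le_sum hstep
        _ = B ^ (-ν) * ∑ m ∈ Ico (M+1) k, (m:ℝ) ^ (-ν) := by rw [Finset.mul_sum]
        _ ≤ B ^ (-ν) * (B ^ (ν - 1) / (ν - 1)) := by
            refine mul_le_mul_of_nonneg_left ?_ (by positivity)
            have hIcc : Ico (M+1) k = Icc (M+1) (k-1) := by
              rw [← Finset.Ico_add_one_right_eq_Icc]; congr 1; omega
            rw [hIcc]
            have hb := sum_Icc_rpow_le (p := -ν) (by linarith) (by intro h; linarith)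
              (a := M) (b := k - 1) hM1 (by omega)
            have hkpos : (0:ℝ) < ((k-1:ℕ):ℝ) ^ (-ν+1) :=
              Real.rpow_pos_of_pos (by exact_mod_cast (by omega : 1 ≤ k-1)) _
            have hMν : (M:ℝ) ^ (-ν+1) ≤ B ^ (ν-1) := by
              have h1 : (M:ℝ) ^ (-ν+1) ≤ (1/B) ^ (-ν+1) :=
                Real.rpow_le_rpow_of_nonpos (by positivity) hMB (by linarith)
              have h2 : (1/B) ^ (-ν+1) = B ^ (ν-1) := by
                rw [one_div, ← Real.rpow_neg_one B, ← Real.rpow_mul hB0.le]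
                congr 1; ring
              linarith
            have heq : (((k-1:ℕ):ℝ) ^ (-ν+1) - (M:ℝ) ^ (-ν+1)) / (-ν+1)
                = ((M:ℝ) ^ (-ν+1) - ((k-1:ℕ):ℝ) ^ (-ν+1)) / (ν-1) := by
              rw [div_eq_div_iff (by linarith) (by linarith : (0:ℝ) < ν-1).ne']
              ring
            have : ((M:ℝ) ^ (-ν+1) - ((k-1:ℕ):ℝ) ^ (-ν+1)) / (ν-1) ≤ B ^ (ν-1) / (ν-1) := by
              rw [div_le_div_iff₀ hν1 hν1]
              nlinarith
            calc ∑ j ∈ Icc (M+1) (k-1), (j:ℝ) ^ (-ν)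
                ≤ (((k-1:ℕ):ℝ) ^ (-ν+1) - (M:ℝ) ^ (-ν+1)) / (-ν+1) := hb
              _ ≤ B ^ (ν-1) / (ν-1) := by rw [heq]; exact this
        _ = (1/B) / (ν-1) := by
            rw [← mul_div_assoc, ← Real.rpow_add hB0,
              show -ν + (ν-1:ℝ) = -1 by ring, Real.rpow_neg_one, one_div]
    calc ∑ m ∈ Ico 0 (M+1), 1 / (1 + (B * m) ^ ν)
          + ∑ m ∈ Ico (M+1) k, 1 / (1 + (B * m) ^ ν)
        ≤ ((M:ℝ) + 1) + (1/B)/(ν-1) := add_le_add hfirst hsecond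
      _ ≤ (1/B + 2) + (1/(ν-1))/B := by
          have : (1/B)/(ν-1) = (1/(ν-1))/B := by ring
          linarith
      _ ≤ (3 + 1/(ν-1)) / B := by
          have he : (3 + 1/(ν-1))/B = 1/B + 2/B + (1/(ν-1))/B := by ring
          linarith


set_option maxHeartbeats 1600000 in
/-- Let `ν > 1`, `γ₁ ∈ (0,1)`, `0 < μ < 1` and `γ_j = γ₁ j^{−μ}`.  Then
there is a constant `C > 0` (depending only on `μ, ν, γ₁` but not on `k` or `λ`) such that
for every `λ > 0` and every integer `k ≥ 1`,
`∑_{i=1}^k γ_i² exp(−λ ∑_{j=i+1}^k γ_j)/(1 + (∑_{j=i+1}^k γ_j)^ν)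
  ≤ C γ₁ (exp(−λ γ₁ d_μ k^{1−μ}) k^{−min(μ, ν(1−μ))} + k^{−μ})`,
where `d_μ = (1 − 2^{μ−1})/(1−μ)` and the inner sum is `0` when `i = k`. -/
theorem stmt19 (ν γ₁ μ : ℝ) (hν : 1 < ν) (hγ₁0 : 0 < γ₁) (hγ₁1 : γ₁ < 1)
    (hμ0 : 0 < μ) (hμ1 : μ < 1) :
    ∃ C > (0 : ℝ), ∀ lam : ℝ, 0 < lam → ∀ k : ℕ, 1 ≤ k →
      ∑ i ∈ Finset.Icc 1 k,
          (γ₁ * (i : ℝ) ^ (-μ)) ^ 2 *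
            Real.exp (-(lam * ∑ j ∈ Finset.Icc (i + 1) k, γ₁ * (j : ℝ) ^ (-μ))) /
            (1 + (∑ j ∈ Finset.Icc (i + 1) k, γ₁ * (j : ℝ) ^ (-μ)) ^ ν) ≤
        C * γ₁ *
          (Real.exp (-(lam * γ₁ * ((1 - 2 ^ (μ - 1)) / (1 - μ)) * (k : ℝ) ^ (1 - μ))) *
              (k : ℝ) ^ (-min μ (ν * (1 - μ))) +
            (k : ℝ) ^ (-μ)) := by
  obtain ⟨C₁, hC₁0, hC₁⟩ := aux1 hν hμ0 hμ1
  set d : ℝ := (1 - 2 ^ (μ - 1)) / (1 - μ) with hd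
  have h2lt : (2:ℝ) ^ (μ - 1) < 1 :=
    Real.rpow_lt_one_of_one_lt_of_neg one_lt_two (by linarith)
  have hd0 : 0 < d := by
    apply div_pos (by linarith) (by linarith)
  set C₂ : ℝ := 3 + 1/(ν-1) with hC₂
  have hC₂0 : 0 < C₂ := by
    have : (0:ℝ) < 1/(ν-1) := one_div_pos.mpr (by linarith)
    simp only [hC₂]; linarith
  set K₁ : ℝ := C₁ * γ₁ / (γ₁ * d) ^ ν with hK₁
  have hK₁0 : 0 < K₁ := by
    have : (0:ℝ) < (γ₁ * d) ^ ν := Real.rpow_pos_of_pos (by positivity) ν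
    positivity
  refine ⟨K₁ + 4 * C₂, by positivity, fun lam hlam k hk => ?_⟩
  have hk0 : (0:ℝ) < k := by exact_mod_cast hk
  have hk1 : (1:ℝ) ≤ k := by exact_mod_cast hk
  set mn : ℝ := min μ (ν * (1 - μ)) with hmn
  set h : ℕ := (k - 1) / 2 with hhdef
  have hS0 : ∀ i : ℕ, 0 ≤ ∑ j ∈ Icc (i + 1) k, γ₁ * (j : ℝ) ^ (-μ) := by
    intro i
    refine Finset.sum_nonneg fun j hj => ?_
    positivity
  set D : ℝ := γ₁ * d * (k:ℝ) ^ (1 - μ) with hD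
  have hD0 : 0 < D := by
    have := Real.rpow_pos_of_pos hk0 (1 - μ)
    positivity
  set E : ℝ := Real.exp (-(lam * D)) with hE
  -- tail bound for i in the first half
  have htail1 : ∀ i ∈ Icc 1 h, D ≤ ∑ j ∈ Icc (i + 1) k, γ₁ * (j : ℝ) ^ (-μ) := by
    intro i hi
    obtain ⟨hi1, hih⟩ := Finset.mem_Icc.mp hi
    have hik : i ≤ k := by omega
    have h2i : 2 * i + 2 ≤ k + 1 := by omega
    have hint := integral_le_sum_Icc_rpow (p := -μ) (by linarith) (by linarith)
      (a := i) (b := k) hik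
    have heq : (-μ + 1 : ℝ) = 1 - μ := by ring
    rw [heq] at hint
    have hcast : ((2:ℝ) * i + 2) ≤ (k:ℝ) + 1 := by exact_mod_cast h2i
    have hstep1 : ((i:ℝ) + 1) ^ (1 - μ) ≤ (((k:ℝ) + 1) / 2) ^ (1 - μ) :=
      Real.rpow_le_rpow (by positivity) (by linarith) (by linarith)
    have hstep2 : (((k:ℝ) + 1) / 2) ^ (1 - μ)
        = ((k:ℝ) + 1) ^ (1 - μ) * 2 ^ (μ - 1) := by
      rw [Real.div_rpow (by positivity) (by norm_num),
        show (μ - 1 : ℝ) = -(1 - μ) by ring, Real.rpow_neg (by norm_num), div_eq_mul_inv]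
    have hstep3 : (k:ℝ) ^ (1 - μ) ≤ ((k:ℝ) + 1) ^ (1 - μ) :=
      Real.rpow_le_rpow hk0.le (by linarith) (by linarith)
    have e1 : ((i:ℝ)+1) ^ (1-μ) ≤ ((k:ℝ)+1) ^ (1-μ) * 2 ^ (μ-1) := by
      rw [← hstep2]; exact hstep1
    have key : (1 - (2:ℝ)^(μ-1)) * (k:ℝ)^(1-μ)
        ≤ ((k:ℝ)+1)^(1-μ) - ((i:ℝ)+1)^(1-μ) := by
      nlinarith [mul_le_mul_of_nonneg_left hstep3
        (show (0:ℝ) ≤ 1 - 2^(μ-1) by linarith), e1]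
    have hDle : D ≤ γ₁ * ((((k:ℝ)+1) ^ (1-μ) - ((i:ℝ)+1) ^ (1-μ)) / (1-μ)) := by
      rw [hD, hd]
      have hnum : (1 - (2:ℝ) ^ (μ-1)) / (1 - μ) * (k:ℝ) ^ (1-μ)
          ≤ ((((k:ℝ)+1) ^ (1-μ) - ((i:ℝ)+1) ^ (1-μ)) / (1-μ)) := by
        rw [div_mul_eq_mul_div, div_le_div_iff₀ (by linarith) (by linarith)]
        nlinarith [key]
      calc γ₁ * ((1 - (2:ℝ) ^ (μ-1)) / (1 - μ)) * (k:ℝ) ^ (1-μ)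
          = γ₁ * ((1 - (2:ℝ) ^ (μ-1)) / (1 - μ) * (k:ℝ) ^ (1-μ)) := by ring
        _ ≤ γ₁ * ((((k:ℝ)+1) ^ (1-μ) - ((i:ℝ)+1) ^ (1-μ)) / (1-μ)) :=
            mul_le_mul_of_nonneg_left hnum hγ₁0.le
    calc D ≤ γ₁ * ((((k:ℝ)+1) ^ (1-μ) - ((i:ℝ)+1) ^ (1-μ)) / (1-μ)) := hDle
      _ ≤ γ₁ * ∑ j ∈ Icc (i + 1) k, (j:ℝ) ^ (-μ) :=
          mul_le_mul_of_nonneg_left hint hγ₁0.le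
      _ = ∑ j ∈ Icc (i + 1) k, γ₁ * (j : ℝ) ^ (-μ) := by rw [Finset.mul_sum]
  -- squared gamma rewrite
  have hsq : ∀ i : ℕ, 1 ≤ i → (γ₁ * (i:ℝ) ^ (-μ)) ^ 2 = γ₁ ^ 2 * (i:ℝ) ^ (-(2*μ)) := by
    intro i hi
    have hi0 : (0:ℝ) < i := by exact_mod_cast hi
    rw [mul_pow, ← Real.rpow_natCast ((i:ℝ) ^ (-μ)) 2, ← Real.rpow_mul hi0.le]
    have : (-μ) * ((2:ℕ):ℝ) = -(2*μ) := by push_cast; ring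
    rw [this]
  have hDν : (0:ℝ) < D ^ ν := Real.rpow_pos_of_pos hD0 ν
  have hE0 : 0 < E := Real.exp_pos _
  -- first half bound
  have hfirst : ∑ i ∈ Icc 1 h,
      (γ₁ * (i : ℝ) ^ (-μ)) ^ 2 *
        Real.exp (-(lam * ∑ j ∈ Icc (i + 1) k, γ₁ * (j : ℝ) ^ (-μ))) /
        (1 + (∑ j ∈ Icc (i + 1) k, γ₁ * (j : ℝ) ^ (-μ)) ^ ν)
      ≤ K₁ * γ₁ * (E * (k:ℝ) ^ (-mn)) := by
    have step1 : ∑ i ∈ Icc 1 h,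
        (γ₁ * (i : ℝ) ^ (-μ)) ^ 2 *
          Real.exp (-(lam * ∑ j ∈ Icc (i + 1) k, γ₁ * (j : ℝ) ^ (-μ))) /
          (1 + (∑ j ∈ Icc (i + 1) k, γ₁ * (j : ℝ) ^ (-μ)) ^ ν)
        ≤ ∑ i ∈ Icc 1 h, γ₁ ^ 2 * (i:ℝ) ^ (-(2*μ)) * E / D ^ ν := by
      refine Finset.sum_le_sum fun i hi => ?_
      have hi1 : 1 ≤ i := (Finset.mem_Icc.mp hi).1
      have hi0 : (0:ℝ) < i := by exact_mod_cast hi1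
      have hsle := htail1 i hi
      have hsnn := hS0 i
      refine div_le_div₀ (by positivity) ?_ hDν ?_
      · rw [hsq i hi1]
        refine mul_le_mul_of_nonneg_left ?_ (by positivity)
        rw [hE]
        exact Real.exp_le_exp.mpr
          (neg_le_neg (mul_le_mul_of_nonneg_left hsle hlam.le))
      · have h1 := Real.rpow_le_rpow hD0.le hsle (by linarith : (0:ℝ) ≤ ν)
        have h2 := Real.rpow_nonneg hsnn ν
        linarith
    have step2 : ∑ i ∈ Icc 1 h, γ₁ ^ 2 * (i:ℝ) ^ (-(2*μ)) * E / D ^ ν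
        ≤ ∑ i ∈ Icc 1 k, γ₁ ^ 2 * (i:ℝ) ^ (-(2*μ)) * E / D ^ ν := by
      refine Finset.sum_le_sum_of_subset_of_nonneg
        (Finset.Icc_subset_Icc_right (by omega)) fun i hi _ => ?_
      have : (0:ℝ) ≤ (i:ℝ) ^ (-(2*μ)) := Real.rpow_nonneg (by positivity) _
      positivity
    have step3 : ∑ i ∈ Icc 1 k, γ₁ ^ 2 * (i:ℝ) ^ (-(2*μ)) * E / D ^ ν
        = (γ₁ ^ 2 * E / D ^ ν) * ∑ i ∈ Icc 1 k, (i:ℝ) ^ (-(2*μ)) := by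
      rw [Finset.mul_sum]
      exact Finset.sum_congr rfl fun i _ => by ring
    have step4 : (γ₁ ^ 2 * E / D ^ ν) * ∑ i ∈ Icc 1 k, (i:ℝ) ^ (-(2*μ))
        ≤ (γ₁ ^ 2 * E / D ^ ν) * (C₁ * ((k:ℝ) ^ (ν*(1-μ)) * (k:ℝ) ^ (-mn))) :=
      mul_le_mul_of_nonneg_left (hC₁ k hk) (by positivity)
    have hDν_eq : D ^ ν = (γ₁*d) ^ ν * (k:ℝ) ^ (ν*(1-μ)) := by
      rw [hD, Real.mul_rpow (by positivity) (by positivity),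
        ← Real.rpow_mul hk0.le]
      rw [show ((1-μ)*ν : ℝ) = ν*(1-μ) by ring]
    have step5 : (γ₁ ^ 2 * E / D ^ ν) * (C₁ * ((k:ℝ) ^ (ν*(1-μ)) * (k:ℝ) ^ (-mn)))
        = K₁ * γ₁ * (E * (k:ℝ) ^ (-mn)) := by
      rw [hDν_eq, hK₁]
      have hgd : ((γ₁*d) ^ ν : ℝ) ≠ 0 := (Real.rpow_pos_of_pos (by positivity) ν).ne'
      have hkν : ((k:ℝ) ^ (ν*(1-μ)) : ℝ) ≠ 0 := (Real.rpow_pos_of_pos hk0 _).ne'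
      field_simp
    calc ∑ i ∈ Icc 1 h,
        (γ₁ * (i : ℝ) ^ (-μ)) ^ 2 *
          Real.exp (-(lam * ∑ j ∈ Icc (i + 1) k, γ₁ * (j : ℝ) ^ (-μ))) /
          (1 + (∑ j ∈ Icc (i + 1) k, γ₁ * (j : ℝ) ^ (-μ)) ^ ν)
        ≤ ∑ i ∈ Icc 1 h, γ₁ ^ 2 * (i:ℝ) ^ (-(2*μ)) * E / D ^ ν := step1
      _ ≤ ∑ i ∈ Icc 1 k, γ₁ ^ 2 * (i:ℝ) ^ (-(2*μ)) * E / D ^ ν := step2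
      _ = (γ₁ ^ 2 * E / D ^ ν) * ∑ i ∈ Icc 1 k, (i:ℝ) ^ (-(2*μ)) := step3
      _ ≤ (γ₁ ^ 2 * E / D ^ ν) * (C₁ * ((k:ℝ) ^ (ν*(1-μ)) * (k:ℝ) ^ (-mn))) := step4
      _ = K₁ * γ₁ * (E * (k:ℝ) ^ (-mn)) := step5
  -- second half bound
  set B : ℝ := γ₁ * (k:ℝ) ^ (-μ) with hB
  have hkneg : (0:ℝ) < (k:ℝ) ^ (-μ) := Real.rpow_pos_of_pos hk0 _
  have hB0 : 0 < B := by positivity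
  have hB1 : B ≤ 1 := by
    have h1 : (k:ℝ) ^ (-μ) ≤ 1 :=
      Real.rpow_le_one_of_one_le_of_nonpos hk1 (by linarith)
    calc B = γ₁ * (k:ℝ) ^ (-μ) := hB
      _ ≤ 1 * 1 := mul_le_mul hγ₁1.le h1 hkneg.le (by norm_num)
      _ = 1 := by norm_num
  have htail2 : ∀ i ∈ Icc (h+1) k, B * ((k-i : ℕ):ℝ)
      ≤ ∑ j ∈ Icc (i + 1) k, γ₁ * (j : ℝ) ^ (-μ) := by
    intro i hi
    obtain ⟨hih, hik⟩ := Finset.mem_Icc.mp hi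
    have hcard : (Icc (i+1) k).card = k - i := by rw [Nat.card_Icc]; omega
    have hlow : ∀ j ∈ Icc (i+1) k, (k:ℝ) ^ (-μ) ≤ (j:ℝ) ^ (-μ) := by
      intro j hj
      obtain ⟨hj1, hjk⟩ := Finset.mem_Icc.mp hj
      exact Real.rpow_le_rpow_of_nonpos (by exact_mod_cast (by omega : 1 ≤ j))
        (by exact_mod_cast hjk) (by linarith)
    have hs := Finset.card_nsmul_le_sum (Icc (i+1) k) _ _ hlow
    rw [hcard, nsmul_eq_mul] at hs
    calc B * ((k-i : ℕ):ℝ) = γ₁ * (((k-i:ℕ):ℝ) * (k:ℝ) ^ (-μ)) := by rw [hB]; ring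
      _ ≤ γ₁ * ∑ j ∈ Icc (i+1) k, (j:ℝ) ^ (-μ) :=
          mul_le_mul_of_nonneg_left hs hγ₁0.le
      _ = ∑ j ∈ Icc (i + 1) k, γ₁ * (j : ℝ) ^ (-μ) := by rw [Finset.mul_sum]
  have hsecond : ∑ i ∈ Icc (h+1) k,
      (γ₁ * (i : ℝ) ^ (-μ)) ^ 2 *
        Real.exp (-(lam * ∑ j ∈ Icc (i + 1) k, γ₁ * (j : ℝ) ^ (-μ))) /
        (1 + (∑ j ∈ Icc (i + 1) k, γ₁ * (j : ℝ) ^ (-μ)) ^ ν)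
      ≤ 4 * C₂ * γ₁ * (k:ℝ) ^ (-μ) := by
    have hperm : ∀ i ∈ Icc (h+1) k,
        (γ₁ * (i : ℝ) ^ (-μ)) ^ 2 *
          Real.exp (-(lam * ∑ j ∈ Icc (i + 1) k, γ₁ * (j : ℝ) ^ (-μ))) /
          (1 + (∑ j ∈ Icc (i + 1) k, γ₁ * (j : ℝ) ^ (-μ)) ^ ν)
        ≤ (4 * γ₁^2 * (k:ℝ) ^ (-(2*μ))) * (1 / (1 + (B * ((k-i:ℕ):ℝ)) ^ ν)) := by
      intro i hi
      obtain ⟨hih, hik⟩ := Finset.mem_Icc.mp hi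
      have hi1 : 1 ≤ i := by omega
      have hi0 : (0:ℝ) < i := by exact_mod_cast hi1
      have h2i : k ≤ 2 * i := by omega
      have h2i' : (k:ℝ) ≤ 2 * i := by exact_mod_cast h2i
      have hipow : (i:ℝ) ^ (-(2*μ)) ≤ 4 * (k:ℝ) ^ (-(2*μ)) := by
        have ha : (i:ℝ) ^ (-(2*μ)) ≤ ((k:ℝ)/2) ^ (-(2*μ)) :=
          Real.rpow_le_rpow_of_nonpos (by positivity) (by linarith) (by linarith)
        have hb : ((k:ℝ)/2) ^ (-(2*μ)) = (k:ℝ) ^ (-(2*μ)) * ((2:ℝ) ^ (-(2*μ)))⁻¹ := by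
          rw [div_eq_mul_inv, Real.mul_rpow hk0.le (by positivity),
            Real.inv_rpow (by norm_num)]
        have hc : ((2:ℝ) ^ (-(2*μ)))⁻¹ = (2:ℝ) ^ (2*μ) := by
          rw [← Real.rpow_neg (by norm_num)]
          norm_num
        have hdd : (2:ℝ) ^ (2*μ) ≤ 4 := by
          calc (2:ℝ) ^ (2*μ) ≤ (2:ℝ) ^ (((2:ℕ)):ℝ) :=
              Real.rpow_le_rpow_of_exponent_le one_le_two (by push_cast; linarith)
            _ = 4 := by rw [Real.rpow_natCast]; norm_num
        have hkpow : (0:ℝ) ≤ (k:ℝ) ^ (-(2*μ)) := Real.rpow_nonneg hk0.le _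
        calc (i:ℝ) ^ (-(2*μ)) ≤ ((k:ℝ)/2) ^ (-(2*μ)) := ha
          _ = (k:ℝ) ^ (-(2*μ)) * (2:ℝ) ^ (2*μ) := by rw [hb, hc]
          _ ≤ (k:ℝ) ^ (-(2*μ)) * 4 := mul_le_mul_of_nonneg_left hdd hkpow
          _ = 4 * (k:ℝ) ^ (-(2*μ)) := by ring
      have hexp1 : Real.exp (-(lam * ∑ j ∈ Icc (i + 1) k, γ₁ * (j : ℝ) ^ (-μ))) ≤ 1 := by
        rw [Real.exp_le_one_iff]
        exact neg_nonpos.mpr (mul_nonneg hlam.le (hS0 i))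
      have hden : 1 + (B * ((k-i:ℕ):ℝ)) ^ ν
          ≤ 1 + (∑ j ∈ Icc (i + 1) k, γ₁ * (j : ℝ) ^ (-μ)) ^ ν := by
        have := Real.rpow_le_rpow (by positivity) (htail2 i hi) (by linarith : (0:ℝ) ≤ ν)
        linarith
      have hdenpos : (0:ℝ) < 1 + (B * ((k-i:ℕ):ℝ)) ^ ν := by positivity
      rw [mul_one_div]
      refine div_le_div₀ (by positivity) ?_ hdenpos hden
      calc (γ₁ * (i : ℝ) ^ (-μ)) ^ 2 *
            Real.exp (-(lam * ∑ j ∈ Icc (i + 1) k, γ₁ * (j : ℝ) ^ (-μ)))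
          ≤ (γ₁ * (i : ℝ) ^ (-μ)) ^ 2 * 1 :=
            mul_le_mul_of_nonneg_left hexp1 (by positivity)
        _ = γ₁^2 * (i:ℝ) ^ (-(2*μ)) := by rw [mul_one, hsq i hi1]
        _ ≤ γ₁^2 * (4 * (k:ℝ) ^ (-(2*μ))) :=
            mul_le_mul_of_nonneg_left hipow (by positivity)
        _ = 4 * γ₁^2 * (k:ℝ) ^ (-(2*μ)) := by ring
    have hreindex : ∑ i ∈ Icc (h+1) k, (1 / (1 + (B * ((k-i:ℕ):ℝ)) ^ ν))
        ≤ ∑ m ∈ range k, 1 / (1 + (B * (m:ℝ)) ^ ν) := by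
      have hinj : ∀ x ∈ Icc (h+1) k, ∀ y ∈ Icc (h+1) k,
          k - x = k - y → x = y := by
        intro x hx y hy hxy
        have hx' := Finset.mem_Icc.mp hx
        have hy' := Finset.mem_Icc.mp hy
        omega
      have himg : (∑ m ∈ (Icc (h+1) k).image (fun i => k - i),
            1 / (1 + (B * (m:ℝ)) ^ ν))
          = ∑ i ∈ Icc (h+1) k, 1 / (1 + (B * ((k-i:ℕ):ℝ)) ^ ν) :=
        Finset.sum_image hinj
      rw [← himg]
      refine Finset.sum_le_sum_of_subset_of_nonneg ?_ fun m hm _ => by positivity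
      intro m hm
      obtain ⟨i, hi, rfl⟩ := Finset.mem_image.mp hm
      have hi' := Finset.mem_Icc.mp hi
      exact Finset.mem_range.mpr (by omega)
    have haux2 := aux2 hν hB0 hB1 k
    have hfinal : (4 * γ₁^2 * (k:ℝ) ^ (-(2*μ))) * ((3 + 1/(ν-1)) / B)
        = 4 * C₂ * γ₁ * (k:ℝ) ^ (-μ) := by
      rw [hB, hC₂]
      have hsplit2 : (k:ℝ) ^ (-(2*μ)) = (k:ℝ) ^ (-μ) * (k:ℝ) ^ (-μ) := by
        rw [← Real.rpow_add hk0]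
        rw [show (-μ + -μ : ℝ) = -(2*μ) by ring]
      rw [hsplit2]
      field_simp
    calc ∑ i ∈ Icc (h+1) k,
        (γ₁ * (i : ℝ) ^ (-μ)) ^ 2 *
          Real.exp (-(lam * ∑ j ∈ Icc (i + 1) k, γ₁ * (j : ℝ) ^ (-μ))) /
          (1 + (∑ j ∈ Icc (i + 1) k, γ₁ * (j : ℝ) ^ (-μ)) ^ ν)
        ≤ ∑ i ∈ Icc (h+1) k,
            (4 * γ₁^2 * (k:ℝ) ^ (-(2*μ))) * (1 / (1 + (B * ((k-i:ℕ):ℝ)) ^ ν)) :=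
          Finset.sum_le_sum hperm
      _ = (4 * γ₁^2 * (k:ℝ) ^ (-(2*μ)))
            * ∑ i ∈ Icc (h+1) k, (1 / (1 + (B * ((k-i:ℕ):ℝ)) ^ ν)) := by
          rw [Finset.mul_sum]
      _ ≤ (4 * γ₁^2 * (k:ℝ) ^ (-(2*μ))) * ∑ m ∈ range k, 1 / (1 + (B * (m:ℝ)) ^ ν) := by
          refine mul_le_mul_of_nonneg_left hreindex ?_
          have : (0:ℝ) ≤ (k:ℝ) ^ (-(2*μ)) := Real.rpow_nonneg hk0.le _
          positivity
      _ ≤ (4 * γ₁^2 * (k:ℝ) ^ (-(2*μ))) * ((3 + 1/(ν-1)) / B) := by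
          refine mul_le_mul_of_nonneg_left haux2 ?_
          have : (0:ℝ) ≤ (k:ℝ) ^ (-(2*μ)) := Real.rpow_nonneg hk0.le _
          positivity
      _ = 4 * C₂ * γ₁ * (k:ℝ) ^ (-μ) := hfinal
  -- split the sum and combine
  have hhk : h + 1 ≤ k + 1 := by omega
  rw [← Finset.Ico_add_one_right_eq_Icc 1 k,
    ← Finset.sum_Ico_consecutive _ (show 1 ≤ h + 1 by omega) hhk,
    Finset.Ico_add_one_right_eq_Icc 1 h, Finset.Ico_add_one_right_eq_Icc (h+1) k]
  have hEeq : Real.exp (-(lam * γ₁ * d * (k:ℝ) ^ (1 - μ))) = E := by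
    rw [hE, hD]
    congr 1
    ring
  rw [hEeq]
  have hXnn : (0:ℝ) ≤ E * (k:ℝ) ^ (-mn) :=
    mul_nonneg hE0.le (Real.rpow_nonneg hk0.le _)
  have hYnn : (0:ℝ) ≤ (k:ℝ) ^ (-μ) := Real.rpow_nonneg hk0.le _
  calc (∑ i ∈ Icc 1 h,
      (γ₁ * (i : ℝ) ^ (-μ)) ^ 2 *
        Real.exp (-(lam * ∑ j ∈ Icc (i + 1) k, γ₁ * (j : ℝ) ^ (-μ))) /
        (1 + (∑ j ∈ Icc (i + 1) k, γ₁ * (j : ℝ) ^ (-μ)) ^ ν))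
      + ∑ i ∈ Icc (h+1) k,
      (γ₁ * (i : ℝ) ^ (-μ)) ^ 2 *
        Real.exp (-(lam * ∑ j ∈ Icc (i + 1) k, γ₁ * (j : ℝ) ^ (-μ))) /
        (1 + (∑ j ∈ Icc (i + 1) k, γ₁ * (j : ℝ) ^ (-μ)) ^ ν)
      ≤ K₁ * γ₁ * (E * (k:ℝ) ^ (-mn)) + 4 * C₂ * γ₁ * (k:ℝ) ^ (-μ) :=
        add_le_add hfirst hsecond
    _ ≤ (K₁ + 4 * C₂) * γ₁ * (E * (k:ℝ) ^ (-mn) + (k:ℝ) ^ (-μ)) := by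
        nlinarith [mul_nonneg (mul_nonneg hC₂0.le hγ₁0.le) hXnn,
          mul_nonneg (mul_nonneg hK₁0.le hγ₁0.le) hYnn]
end
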